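/- For every (ξ,μ) ∈ 𝒫 = (1.18,1.19) × (−10,−9), one has (ξ/2)·p_μ + (1 − ξ/2)·√(p_μ − μ) + (ξ − 1)·p̃_{ξ,μ} > 0; equivalently, the point z̃_{ξ,μ} = (ξ/2)·p_μ + (1 − ξ/2)·√(p_μ − μ) + ξ·p̃_{ξ,μ}, obtained by applying g_{ξ,μ}(y,z) = (μ + y², ξ·z + y) to the point of the line z = −(1/2)(y − p_μ) + p̃_{ξ,μ} with y = √(p_μ − μ), satisfies z̃_{ξ,μ} > p̃_{ξ,μ}. -/
import Mathlib


open Set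

noncomputable def pm (μ : ℝ) : ℝ := (1 - Real.sqrt (1 - 4 * μ)) / 2
noncomputable def ptilde (ξ μ : ℝ) : ℝ := pm μ / (1 - ξ)

theorem image_of_slope_line_above_fixed_height (ξ μ : ℝ)
    (hξ : ξ ∈ Ioo (1.18 : ℝ) 1.19) (hμ : μ ∈ Ioo (-10 : ℝ) (-9)) :
    (ξ / 2) * pm μ + (1 - ξ / 2) * Real.sqrt (pm μ - μ) + (ξ - 1) * ptilde ξ μ > 0 ∧
    (ξ / 2) * pm μ + (1 - ξ / 2) * Real.sqrt (pm μ - μ) + ξ * ptilde ξ μ > ptilde ξ μ := by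
  obtain ⟨hξ1, hξ2⟩ := hξ
  obtain ⟨hμ1, hμ2⟩ := hμ
  have h1 : (1:ℝ) < Real.sqrt (1 - 4 * μ) := by
    have h : (1:ℝ) < 1 - 4 * μ := by linarith
    calc (1:ℝ) = Real.sqrt 1 := Real.sqrt_one.symm
    _ < _ := Real.sqrt_lt_sqrt (by norm_num) h
  have hpm : pm μ < 0 := by unfold pm; linarith
  have hne : (1 : ℝ) - ξ ≠ 0 := by intro h; linarith
  have key : (ξ - 1) * ptilde ξ μ = - pm μ := by
    unfold ptilde; field_simp; ring
  have hsq : 0 ≤ Real.sqrt (pm μ - μ) := Real.sqrt_nonneg _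
  have hpos : 0 < 1 - ξ / 2 := by linarith
  have hfirst : (ξ / 2) * pm μ + (1 - ξ / 2) * Real.sqrt (pm μ - μ) + (ξ - 1) * ptilde ξ μ > 0 := by
    rw [key]
    nlinarith [mul_nonneg hpos.le hsq]
  refine ⟨hfirst, ?_⟩
  nlinarith [hfirst]
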